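/- arXiv:1512.09198 — 3 statements merged into one kernel-verified Lean document; each statement's English description precedes it below -/
import Mathlib

section
/- Let V be an oriented 4-dimensional real vector space, g an inner product, ρ a 2-form with ρ∧ρ = 2u·dvol_g, u > 0, and A ∈ GL(V) defined by g(A·,·) = ρ. Define the inner product g̃(v,w) := u⁻¹ g(Av,Aw). Then dvol_g̃ = dvol_g and for every covector λ ∈ V*, *_g̃ λ = u⁻¹ ρ ∧ *_g(ρ ∧ λ). -/
open Matrix MeasureTheory

noncomputable section

/-- Vectors in ℝ⁴. -/
abbrev V4 : Type := Fin 4 → ℝ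

/-- 2-forms on ℝ⁴, represented by their (antisymmetric) coefficient matrices. -/
abbrev Mat4 : Type := Matrix (Fin 4) (Fin 4) ℝ

/-- The wedge product of two 2-forms, as the coefficient of dx0∧dx1∧dx2∧dx3. -/
def w22 (A B : Mat4) : ℝ :=
  A 0 1 * B 2 3 - A 0 2 * B 1 3 + A 0 3 * B 1 2 +
  A 2 3 * B 0 1 - A 1 3 * B 0 2 + A 1 2 * B 0 3

/-- The wedge product of a 1-form and a 3-form (3-forms are written in the
basis σ_m = ι(e_m)(dx0∧dx1∧dx2∧dx3)), as a multiple of dx0∧dx1∧dx2∧dx3. -/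
def w13 (l b : V4) : ℝ := l ⬝ᵥ b

/-- The wedge product of a 2-form and a 1-form, as a 3-form in the basis σ_m. -/
def w21 (A : Mat4) (l : V4) : V4 :=
  ![A 1 2 * l 3 - A 1 3 * l 2 + A 2 3 * l 1,
    -(A 0 2 * l 3 - A 0 3 * l 2 + A 2 3 * l 0),
    A 0 1 * l 3 - A 0 3 * l 1 + A 1 3 * l 0,
    -(A 0 1 * l 2 - A 0 2 * l 1 + A 1 2 * l 0)]

/-- Interior product of a vector with a 2-form. -/
def iota2 (v : V4) (A : Mat4) : V4 := Aᵀ.mulVec v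

/-- Interior product of a vector with a 4-form c·dx0∧dx1∧dx2∧dx3. -/
def iota4 (v : V4) (c : ℝ) : V4 := c • v

/-- The metric volume form of the inner product with Gram matrix G, as a
multiple of dx0∧dx1∧dx2∧dx3 (standard orientation). -/
def volScalar (G : Mat4) : ℝ := Real.sqrt G.det

/-- The inner product with Gram matrix G. -/
def bilin (G : Mat4) (v w : V4) : ℝ := v ⬝ᵥ G.mulVec w

/-- The induced inner product on 1-forms. -/
def ip1 (G : Mat4) (l m : V4) : ℝ := l ⬝ᵥ G⁻¹.mulVec m

/-- The induced inner product on 2-forms. -/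
def ip2 (G : Mat4) (A B : Mat4) : ℝ := (1 / 2) * (Aᵀ * G⁻¹ * B * G⁻¹).trace

/-- The wedge-duality involution on 2-forms (the Hodge star of the standard
metric), characterized by w22 A (dual2 B) = ip2 1 A B. -/
def dual2 (A : Mat4) : Mat4 :=
  !![0, A 2 3, -(A 1 3), A 1 2;
     -(A 2 3), 0, A 0 3, -(A 0 2);
     A 1 3, -(A 0 3), 0, A 0 1;
     -(A 1 2), A 0 2, -(A 0 1), 0]

/-- The Hodge star on 2-forms of the metric with Gram matrix G,
characterized by α ∧ (hodge2 G β) = ⟨α,β⟩_G dvol_G. -/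
def hodge2 (G : Mat4) (A : Mat4) : Mat4 := volScalar G • dual2 (G⁻¹ * A * G⁻¹)

/-- The Hodge star Λ¹ → Λ³ of G, characterized by λ ∧ (hodge1 G μ) = ⟨λ,μ⟩_G dvol_G. -/
def hodge1 (G : Mat4) (m : V4) : V4 := volScalar G • G⁻¹.mulVec m

/-- The Hodge star Λ³ → Λ¹ of G, characterized by hodge1 G (hodge3 G b) = -b. -/
def hodge3 (G : Mat4) (b : V4) : V4 := -((volScalar G)⁻¹ • G.mulVec b)

/-- A complex structure J (J² = -1) is compatible with the standard orientation. -/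
def posOrient (J : Mat4) : Prop :=
  ∃ v w : V4, 0 < (Matrix.of fun i k => ![v, J.mulVec v, w, J.mulVec w] k i).det

/-- The inner product on 2-forms induced by the standard metric. -/
def ip2std (A B : Mat4) : ℝ := (1 / 2) * (Aᵀ * B).trace

/-- The involution R^ρ of the space of 2-forms determined by a
nondegenerate 2-form ρ (with matrix P). -/
def Rmap (P A : Mat4) : Mat4 := A - (w22 A P / (w22 P P / 2)) • P

/-- The standard hyperKähler triple ω₁ = dx0∧dx1 + dx2∧dx3, etc. -/
def sW1 : Mat4 := !![0,1,0,0; -1,0,0,0; 0,0,0,1; 0,0,-1,0]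
def sW2 : Mat4 := !![0,0,1,0; 0,0,0,-1; -1,0,0,0; 0,1,0,0]
def sW3 : Mat4 := !![0,0,0,1; 0,0,1,0; 0,-1,0,0; -1,0,0,0]


/-- Two matrices giving the same bilinear form are equal. -/
lemma eq_of_forall_dot (M N : Mat4)
    (h : ∀ v w : V4, v ⬝ᵥ M.mulVec w = v ⬝ᵥ N.mulVec w) : M = N := by
  ext i j
  have := h (Pi.single i 1) (Pi.single j 1)
  simpa [Matrix.mulVec_single, Pi.single_apply, dotProduct,
    Fin.sum_univ_four] using this

lemma dot_mulVec_eq (M : Mat4) (v x : V4) :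
    (M.mulVec v) ⬝ᵥ x = v ⬝ᵥ Mᵀ.mulVec x := by
  rw [dotProduct_comm, Matrix.dotProduct_mulVec, dotProduct_comm,
    Matrix.mulVec_transpose]

/-- Skew matrices are determined by their upper entries. -/
lemma skew_rep (P : Mat4) (hP : Pᵀ = -P) :
    P = !![0, P 0 1, P 0 2, P 0 3;
           -(P 0 1), 0, P 1 2, P 1 3;
           -(P 0 2), -(P 1 2), 0, P 2 3;
           -(P 0 3), -(P 1 3), -(P 2 3), 0] := by
  have hs : ∀ i j, P j i = -P i j := by
    intro i j
    have := congrFun (congrFun hP i) j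
    simpa using this
  ext i j
  fin_cases i <;> fin_cases j <;>
    simp [Matrix.cons_val_zero, Matrix.cons_val_one] <;>
    first
      | rfl
      | (exact hs _ _)
      | (have := hs 0 0; linarith)
      | (have := hs 1 1; linarith)
      | (have := hs 2 2; linarith)
      | (have := hs 3 3; linarith)

lemma skew_mul_dual2 (a b c d e f : ℝ) :
    (!![0,a,b,c; -a,0,d,e; -b,-d,0,f; -c,-e,-f,0] : Mat4) *
      dual2 !![0,a,b,c; -a,0,d,e; -b,-d,0,f; -c,-e,-f,0]
      = (-(a * f - b * e + c * d)) • (1 : Mat4) := by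
  ext i j
  fin_cases i <;> fin_cases j <;>
    simp [Matrix.mul_apply, dual2, Fin.sum_univ_four, Matrix.one_apply,
      Matrix.smul_apply] <;> ring

lemma skew_det (a b c d e f : ℝ) :
    (!![0,a,b,c; -a,0,d,e; -b,-d,0,f; -c,-e,-f,0] : Mat4).det
      = (a * f - b * e + c * d) ^ 2 := by
  simp [Matrix.det_succ_row_zero, Fin.sum_univ_succ, Fin.succAbove,
    Fin.castAdd, Fin.castSucc, Fin.castLE, Matrix.cons_val_zero,
    Matrix.cons_val_one, Matrix.head_cons]
  ring

lemma w21_eq_dual2_mulVec (P : Mat4) (l : V4) :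
    w21 P l = (dual2 P).mulVec l := by
  funext i
  fin_cases i <;>
    simp [w21, dual2, Matrix.mulVec, dotProduct, Fin.sum_univ_four] <;> ring

/-- for g̃(v,w) = u⁻¹g(Av,Aw) with g(A·,·) = ρ and
ρ∧ρ = 2u·dvol_g, one has dvol_g̃ = dvol_g and *_g̃λ = u⁻¹ρ∧*_g(ρ∧λ). -/
theorem tilde_metric_volume_and_star1 (G : Mat4) (hG : G.PosDef)
    (P : Mat4) (hP : Pᵀ = -P)
    (u : ℝ) (hu : 0 < u) (huP : w22 P P = 2 * u * volScalar G)
    (A : Mat4) (hA : ∀ v w : V4, (A.mulVec v) ⬝ᵥ G.mulVec w = v ⬝ᵥ P.mulVec w)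
    (Gt : Mat4)
    (hGt : ∀ v w : V4,
      v ⬝ᵥ Gt.mulVec w = u⁻¹ * ((A.mulVec v) ⬝ᵥ G.mulVec (A.mulVec w))) :
    volScalar Gt = volScalar G ∧
      ∀ l : V4, hodge1 Gt l = u⁻¹ • w21 P (hodge3 G (w21 P l)) := by
  classical
  have hdet : (0:ℝ) < G.det := hG.det_pos
  set s : ℝ := Real.sqrt G.det with hs_def
  have hs0 : 0 < s := Real.sqrt_pos.2 hdet
  have hs2 : s * s = G.det := Real.mul_self_sqrt hdet.le
  have hvolG : volScalar G = s := rfl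
  have hPf : P 0 1 * P 2 3 - P 0 2 * P 1 3 + P 0 3 * P 1 2 = u * s := by
    have h := huP
    rw [w22, hvolG] at h
    linarith
  have hGsymm : Gᵀ = G := by
    have := hG.1
    simpa [Matrix.IsHermitian] using this
  have hGunit : IsUnit G.det := isUnit_iff_ne_zero.2 (ne_of_gt hdet)
  have hGinvG : G⁻¹ * G = 1 := Matrix.nonsing_inv_mul G hGunit
  -- A^T G = P
  have hAG : Aᵀ * G = P := by
    apply eq_of_forall_dot
    intro v w
    have := hA v w
    rw [dot_mulVec_eq A v (G.mulVec w)] at this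
    simpa [Matrix.mulVec_mulVec] using this
  -- G A = -P
  have hGA : G * A = -P := by
    have h := congrArg Matrix.transpose hAG
    rw [Matrix.transpose_mul, Matrix.transpose_transpose, hGsymm, hP] at h
    simpa using h
  have hAeq : A = -(G⁻¹ * P) := by
    calc A = (G⁻¹ * G) * A := by rw [hGinvG, one_mul]
    _ = G⁻¹ * (G * A) := by rw [Matrix.mul_assoc]
    _ = -(G⁻¹ * P) := by rw [hGA, Matrix.mul_neg]
  -- Gt = u⁻¹ • (Aᵀ G A)
  have hGtmat : Gt = u⁻¹ • (Aᵀ * G * A) := by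
    apply eq_of_forall_dot
    intro v w
    rw [hGt v w]
    have h1 : (A.mulVec v) ⬝ᵥ G.mulVec (A.mulVec w)
        = v ⬝ᵥ (Aᵀ * G * A).mulVec w := by
      rw [dot_mulVec_eq A v (G.mulVec (A.mulVec w))]
      simp [Matrix.mulVec_mulVec, Matrix.mul_assoc]
    rw [h1, Matrix.smul_mulVec, dotProduct_smul, smul_eq_mul]
  have hGtP : Gt = (-u⁻¹) • (P * (G⁻¹ * P)) := by
    rw [hGtmat, hAG, hAeq, Matrix.mul_neg, smul_neg, ← neg_smul]
  set D : Mat4 := dual2 P with hD_def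
  have hPD : P * D = (-(u * s)) • (1 : Mat4) := by
    have hrep := skew_rep P hP
    rw [hD_def]
    conv_lhs => rw [hrep]
    rw [skew_mul_dual2, hPf]
  have hdetP : P.det = (u * s) ^ 2 := by
    conv_lhs => rw [skew_rep P hP]
    rw [skew_det, hPf]
  -- the inverse of Gt
  set X : Mat4 := (-(u⁻¹ * (s⁻¹ * s⁻¹))) • (D * G * D) with hX_def
  have hbig : (P * (G⁻¹ * P)) * (D * G * D) = ((u*s)*(u*s)) • (1 : Mat4) := by
    have h1 : (P * (G⁻¹ * P)) * (D * G * D)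
        = (P * G⁻¹) * ((P * D) * (G * D)) := by
      simp only [Matrix.mul_assoc]
    rw [h1, hPD, Matrix.smul_mul, one_mul, Matrix.mul_smul]
    have h2 : P * G⁻¹ * (G * D) = P * D := by
      rw [← Matrix.mul_assoc, Matrix.mul_assoc P G⁻¹ G, hGinvG, mul_one]
    rw [h2, hPD, smul_smul]
    congr 1
    ring
  have hGtX : Gt * X = 1 := by
    rw [hGtP, hX_def, Matrix.smul_mul, Matrix.mul_smul, smul_smul, hbig,
      smul_smul]
    have hune : u ≠ 0 := ne_of_gt hu
    have hsne : s ≠ 0 := ne_of_gt hs0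
    have hc : -u⁻¹ * -(u⁻¹ * (s⁻¹ * s⁻¹)) * (u * s * (u * s)) = 1 := by
      field_simp
    rw [hc, one_smul]
  have hGtinv : Gt⁻¹ = X := Matrix.inv_eq_right_inv hGtX
  -- determinant of Gt
  have hdetGt : Gt.det = G.det := by
    rw [hGtP, Matrix.det_smul, Matrix.det_mul, Matrix.det_mul,
      Matrix.det_nonsing_inv, hdetP, Ring.inverse_eq_inv', Fintype.card_fin]
    rw [← hs2]
    have hune : u ≠ 0 := ne_of_gt hu
    have hsne : s ≠ 0 := ne_of_gt hs0
    field_simp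
  refine ⟨by rw [volScalar, volScalar, hdetGt], ?_⟩
  intro l
  have hvolGt : volScalar Gt = s := by rw [volScalar, hdetGt]
  rw [hodge1, hvolGt, hGtinv, hX_def]
  rw [w21_eq_dual2_mulVec, hodge3, hvolG, w21_eq_dual2_mulVec, ← hD_def]
  rw [Matrix.mulVec_neg, Matrix.mulVec_smul]
  have hl : (D * G * D).mulVec l = D.mulVec (G.mulVec (D.mulVec l)) := by
    simp [← Matrix.mulVec_mulVec]
  rw [Matrix.smul_mulVec, hl]
  rw [smul_smul]
  rw [smul_neg, smul_smul]
  rw [← neg_smul]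
  congr 1
  have hsne : s ≠ 0 := ne_of_gt hs0
  field_simp


end
end

section
/- Let V be an oriented 4-dimensional real vector space with inner product g and ρ a 2-form with ρ∧ρ > 0. For Θ := (*ρ)/u - (1/2)|ρ/u|²ρ with u := (ρ∧ρ)/(2 dvol_g), one has Θ∧Θ ≤ 0 (as a multiple of dvol_g), with equality if and only if ρ is self-dual. -/
open Matrix MeasureTheory

noncomputable section

/-! ### Auxiliary lemmas -/

lemma skew_apply' {P : Mat4} (hP : Pᵀ = -P) : ∀ i j, P j i = -P i j := fun i j => by
  have := congrFun (congrFun hP i) j; simpa using this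

lemma skew_diag' {P : Mat4} (hP : Pᵀ = -P) : ∀ i, P i i = 0 := fun i => by
  have := skew_apply' hP i i; linarith

lemma dual2_skew' (A : Mat4) : (dual2 A)ᵀ = -(dual2 A) := by
  ext i j
  fin_cases i <;> fin_cases j <;> simp [dual2]

lemma dual2_dual2' {P : Mat4} (hP : Pᵀ = -P) : dual2 (dual2 P) = P := by
  ext i j
  fin_cases i <;> fin_cases j <;>
    simp [dual2, skew_apply' hP 1 0, skew_apply' hP 2 0, skew_apply' hP 2 1,
      skew_apply' hP 3 0, skew_apply' hP 3 1, skew_apply' hP 3 2,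
      skew_diag' hP 0, skew_diag' hP 1, skew_diag' hP 2, skew_diag' hP 3]

lemma w22_comm' (A B : Mat4) : w22 A B = w22 B A := by unfold w22; ring

lemma det4' (M : Mat4) : M.det =
   M 0 0*(M 1 1*(M 2 2*M 3 3 - M 2 3*M 3 2) - M 1 2*(M 2 1*M 3 3 - M 2 3*M 3 1) + M 1 3*(M 2 1*M 3 2 - M 2 2*M 3 1))
  -M 0 1*(M 1 0*(M 2 2*M 3 3 - M 2 3*M 3 2) - M 1 2*(M 2 0*M 3 3 - M 2 3*M 3 0) + M 1 3*(M 2 0*M 3 2 - M 2 2*M 3 0))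
  +M 0 2*(M 1 0*(M 2 1*M 3 3 - M 2 3*M 3 1) - M 1 1*(M 2 0*M 3 3 - M 2 3*M 3 0) + M 1 3*(M 2 0*M 3 1 - M 2 1*M 3 0))
  -M 0 3*(M 1 0*(M 2 1*M 3 2 - M 2 2*M 3 1) - M 1 1*(M 2 0*M 3 2 - M 2 2*M 3 0) + M 1 2*(M 2 0*M 3 1 - M 2 1*M 3 0)) := by
  have e1 : (Fin.succ 2 : Fin 4) = 3 := rfl
  have e2 : (Fin.succ 1 : Fin 4) = 2 := rfl
  have e3 : (Fin.succ 0 : Fin 4) = 1 := rfl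
  have e4 : (Fin.castSucc 2 : Fin 4) = 2 := rfl
  have e5 : ((3 : Fin 4) : ℕ) = 3 := rfl
  rw [Matrix.det_succ_row_zero, Fin.sum_univ_four]
  norm_num [Matrix.det_fin_three, Matrix.submatrix_apply, Fin.succAbove, Fin.lt_def,
    e1, e2, e3, e4, e5]
  ring

set_option maxHeartbeats 4000000 in
lemma key_dual_aux (H P : Mat4) (d : ℝ)
    (hd : d =
      H 0 0*(H 1 1*(H 2 2*H 3 3 - H 2 3*H 3 2) - H 1 2*(H 2 1*H 3 3 - H 2 3*H 3 1) + H 1 3*(H 2 1*H 3 2 - H 2 2*H 3 1))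
     -H 0 1*(H 1 0*(H 2 2*H 3 3 - H 2 3*H 3 2) - H 1 2*(H 2 0*H 3 3 - H 2 3*H 3 0) + H 1 3*(H 2 0*H 3 2 - H 2 2*H 3 0))
     +H 0 2*(H 1 0*(H 2 1*H 3 3 - H 2 3*H 3 1) - H 1 1*(H 2 0*H 3 3 - H 2 3*H 3 0) + H 1 3*(H 2 0*H 3 1 - H 2 1*H 3 0))
     -H 0 3*(H 1 0*(H 2 1*H 3 2 - H 2 2*H 3 1) - H 1 1*(H 2 0*H 3 2 - H 2 2*H 3 0) + H 1 2*(H 2 0*H 3 1 - H 2 1*H 3 0)))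
    (hH : Hᵀ = H) (hP : Pᵀ = -P) :
    H * dual2 (H * P * H) * H = d • dual2 P := by
  have hs : ∀ i j, H j i = H i j := fun i j => by
    have := congrFun (congrFun hH i) j; simpa using this
  have ha : ∀ i j, P j i = -P i j := skew_apply' hP
  have hd0 : ∀ i, P i i = 0 := skew_diag' hP
  ext i j
  fin_cases i <;> fin_cases j <;>
  · simp only [hd, dual2, Matrix.mul_apply, Fin.sum_univ_four, Matrix.smul_apply, smul_eq_mul,
      Matrix.cons_val', Matrix.cons_val_zero, Matrix.cons_val_one, Matrix.head_cons,
      Matrix.empty_val', Matrix.cons_val_fin_one, Matrix.cons_val_two, Matrix.cons_val_three,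
      Matrix.tail_cons, Matrix.head_fin_const, Fin.isValue, Matrix.of_apply, Fin.zero_eta,
      Fin.mk_one, Fin.reduceFinMk,
      hs 1 0, hs 2 0, hs 2 1, hs 3 0, hs 3 1, hs 3 2,
      ha 1 0, ha 2 0, ha 2 1, ha 3 0, ha 3 1, ha 3 2, hd0 0, hd0 1, hd0 2, hd0 3]
    ring

lemma key_dual' (H P : Mat4) (hH : Hᵀ = H) (hP : Pᵀ = -P) :
    H * dual2 (H * P * H) * H = H.det • dual2 P :=
  key_dual_aux H P H.det (det4' H) hH hP

lemma w22_dual2' {A B : Mat4} (hA : Aᵀ = -A) (hB : Bᵀ = -B) :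
    w22 A (dual2 B) = (1 / 2) * (Aᵀ * B).trace := by
  simp only [w22, dual2, Matrix.trace, Matrix.diag, Matrix.mul_apply, Fin.sum_univ_four,
    Matrix.transpose_apply, Matrix.cons_val', Matrix.cons_val_zero, Matrix.cons_val_one,
    Matrix.head_cons, Matrix.empty_val', Matrix.cons_val_fin_one, Matrix.cons_val_two,
    Matrix.cons_val_three, Matrix.tail_cons, Matrix.head_fin_const, Matrix.of_apply,
    skew_apply' hA 1 0, skew_apply' hA 2 0, skew_apply' hA 2 1,
    skew_apply' hA 3 0, skew_apply' hA 3 1, skew_apply' hA 3 2,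
    skew_apply' hB 1 0, skew_apply' hB 2 0, skew_apply' hB 2 1,
    skew_apply' hB 3 0, skew_apply' hB 3 1, skew_apply' hB 3 2,
    skew_diag' hA 0, skew_diag' hA 1, skew_diag' hA 2, skew_diag' hA 3,
    skew_diag' hB 0, skew_diag' hB 1, skew_diag' hB 2, skew_diag' hB 3]
  ring

lemma trace_dual_swap' {A B : Mat4} (hA : Aᵀ = -A) (hB : Bᵀ = -B) :
    (Aᵀ * dual2 B).trace = ((dual2 A)ᵀ * B).trace := by
  simp only [dual2, Matrix.trace, Matrix.diag, Matrix.mul_apply, Fin.sum_univ_four,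
    Matrix.transpose_apply, Matrix.cons_val', Matrix.cons_val_zero, Matrix.cons_val_one,
    Matrix.head_cons, Matrix.empty_val', Matrix.cons_val_fin_one, Matrix.cons_val_two,
    Matrix.cons_val_three, Matrix.tail_cons, Matrix.head_fin_const, Matrix.of_apply,
    skew_apply' hA 1 0, skew_apply' hA 2 0, skew_apply' hA 2 1,
    skew_apply' hA 3 0, skew_apply' hA 3 1, skew_apply' hA 3 2,
    skew_apply' hB 1 0, skew_apply' hB 2 0, skew_apply' hB 2 1,
    skew_apply' hB 3 0, skew_apply' hB 3 1, skew_apply' hB 3 2,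
    skew_diag' hA 0, skew_diag' hA 1, skew_diag' hA 2, skew_diag' hA 3,
    skew_diag' hB 0, skew_diag' hB 1, skew_diag' hB 2, skew_diag' hB 3]
  ring

lemma w22_expand' (x y : ℝ) (A B : Mat4) :
    w22 (x • A - y • B) (x • A - y • B)
      = x^2 * w22 A A - 2*(x*y) * w22 A B + y^2 * w22 B B := by
  simp only [w22, Matrix.sub_apply, Matrix.smul_apply, smul_eq_mul]
  ring

lemma ip2_expand' (G : Mat4) (x : ℝ) (A B : Mat4) :
    ip2 G (x • A - B) (x • A - B)
      = x^2 * ip2 G A A - x * ip2 G A B - x * ip2 G B A + ip2 G B B := by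
  simp only [ip2, Matrix.transpose_sub, Matrix.transpose_smul, Matrix.sub_mul, Matrix.mul_sub,
    Matrix.smul_mul, Matrix.mul_smul, Matrix.trace_sub, Matrix.trace_smul, smul_eq_mul,
    Matrix.trace_add, Matrix.sub_mul]
  ring

lemma tr_sym' (H A B : Mat4) (hH : Hᵀ = H) :
    (Aᵀ * H * B * H).trace = (Bᵀ * H * A * H).trace := by
  conv_lhs => rw [← Matrix.trace_transpose]
  rw [show (Aᵀ * H * B * H)ᵀ = H * (Bᵀ * (H * A)) by
        simp [Matrix.transpose_mul, hH, Matrix.mul_assoc],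
      Matrix.trace_mul_comm]
  congr 1
  simp only [Matrix.mul_assoc]

lemma trace_tmul_nonneg' (K : Mat4) : 0 ≤ (Kᵀ * K).trace := by
  have h : (Kᵀ * K).trace = ∑ j : Fin 4, (fun i => K i j) ⬝ᵥ (fun i => K i j) := by
    simp [Matrix.trace, Matrix.diag, Matrix.mul_apply, dotProduct]
  rw [h]
  exact Finset.sum_nonneg fun j _ =>
    Finset.sum_nonneg fun i _ => mul_self_nonneg _

lemma trace_tmul_eq_zero' {K : Mat4} (h : (Kᵀ * K).trace = 0) : K = 0 := by
  have hdiag : (Kᵀ * K).trace = ∑ j : Fin 4, (fun i => K i j) ⬝ᵥ (fun i => K i j) := by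
    simp [Matrix.trace, Matrix.diag, Matrix.mul_apply, dotProduct]
  rw [hdiag] at h
  have hnn : ∀ j ∈ (Finset.univ : Finset (Fin 4)),
      0 ≤ (fun i => K i j) ⬝ᵥ (fun i => K i j) := fun j _ => by
    simp only [dotProduct]
    exact Finset.sum_nonneg fun i _ => mul_self_nonneg _
  have hz := (Finset.sum_eq_zero_iff_of_nonneg hnn).mp h
  ext i j
  have := dotProduct_self_eq_zero.mp (hz j (Finset.mem_univ j))
  have := congrFun this i
  simpa using this

open scoped MatrixOrder in
lemma ip2_self_nonneg' (G : Mat4) (hG : G.PosDef) (N : Mat4) :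
    0 ≤ ip2 G N N ∧ (ip2 G N N = 0 ↔ N = 0) := by
  have hHpd : (G⁻¹).PosDef := hG.inv
  set S := CFC.sqrt (G⁻¹) with hSdef
  have hS2 : S * S = G⁻¹ := CFC.sqrt_mul_sqrt_self (G⁻¹) hHpd.posSemidef.nonneg
  have hSt : Sᵀ = S := by
    have h := (Matrix.nonneg_iff_posSemidef.mp (CFC.sqrt_nonneg (G⁻¹))).1
    ext i j
    have := congrFun (congrFun h i) j
    simpa [Matrix.conjTranspose_apply] using this
  have hdetS : IsUnit S.det := by
    have h1 : S.det * S.det = (G⁻¹).det := by rw [← Matrix.det_mul, hS2]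
    have h2 : (G⁻¹).det ≠ 0 := ne_of_gt hHpd.det_pos
    refine isUnit_iff_ne_zero.mpr fun h0 => h2 ?_
    rw [← h1, h0, mul_zero]
  have htr : (Nᵀ * G⁻¹ * N * G⁻¹).trace = ((S * N * S)ᵀ * (S * N * S)).trace := by
    rw [← hS2]
    have e1 : Nᵀ * (S * S) * N * (S * S) = (Nᵀ * (S * (S * (N * S)))) * S := by
      simp only [Matrix.mul_assoc]
    rw [e1, Matrix.trace_mul_comm]
    congr 1
    simp only [Matrix.transpose_mul, hSt, Matrix.mul_assoc]
  have hip : ip2 G N N = (1 / 2) * ((S * N * S)ᵀ * (S * N * S)).trace := by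
    rw [ip2, htr]
  constructor
  · rw [hip]
    have := trace_tmul_nonneg' (S * N * S)
    linarith
  · rw [hip]
    constructor
    · intro h
      have hz : ((S * N * S)ᵀ * (S * N * S)).trace = 0 := by linarith
      have hK0 : S * N * S = 0 := trace_tmul_eq_zero' hz
      have hN : N = S⁻¹ * (S * N * S) * S⁻¹ :=
        calc N = (S⁻¹ * S) * N * (S * S⁻¹) := by
                rw [Matrix.nonsing_inv_mul _ hdetS, Matrix.mul_nonsing_inv _ hdetS,
                  Matrix.one_mul, Matrix.mul_one]
          _ = S⁻¹ * (S * N * S) * S⁻¹ := by simp only [Matrix.mul_assoc]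
      rw [hN, hK0]
      simp
    · intro h
      rw [h]
      simp

/-- Θ∧Θ ≤ 0 (as a multiple of dvol_g), with equality iff ρ is
self-dual. -/
theorem Theta_square_nonpos (G : Mat4) (hG : G.PosDef)
    (P : Mat4) (hP : Pᵀ = -P) (hpos : 0 < w22 P P) :
    let u := w22 P P / (2 * volScalar G)
    let Θ := u⁻¹ • hodge2 G P - (2⁻¹ * (ip2 G P P / u ^ 2)) • P
    w22 Θ Θ ≤ 0 ∧ (w22 Θ Θ = 0 ↔ hodge2 G P = P) := by
  intro u Θ
  have hdG : 0 < G.det := hG.det_pos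
  have hv : 0 < volScalar G := Real.sqrt_pos.mpr hdG
  have hv2 : volScalar G ^ 2 = G.det := Real.sq_sqrt hdG.le
  set v := volScalar G with hvdef
  have hvne : v ≠ 0 := ne_of_gt hv
  have hWne : w22 P P ≠ 0 := ne_of_gt hpos
  have hGt : Gᵀ = G := by
    ext i j
    have := congrFun (congrFun hG.1 i) j
    simpa [Matrix.conjTranspose_apply] using this
  have hH : (G⁻¹)ᵀ = G⁻¹ := by rw [Matrix.transpose_nonsing_inv, hGt]
  have hHdet : (G⁻¹).det = (v ^ 2)⁻¹ := by
    rw [Matrix.det_nonsing_inv, Ring.inverse_eq_inv', hv2]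
  have hHPH : (G⁻¹ * P * G⁻¹)ᵀ = -(G⁻¹ * P * G⁻¹) := by
    simp only [Matrix.transpose_mul, hH, hP, Matrix.neg_mul, Matrix.mul_neg, Matrix.mul_assoc]
  have hDskew : (dual2 (G⁻¹ * P * G⁻¹))ᵀ = -(dual2 (G⁻¹ * P * G⁻¹)) := dual2_skew' _
  have keyHDH : G⁻¹ * dual2 (G⁻¹ * P * G⁻¹) * G⁻¹ = (v ^ 2)⁻¹ • dual2 P := by
    refine key_dual_aux (G⁻¹) P ((v ^ 2)⁻¹) ?_ hH hP
    rw [← det4' (G⁻¹), hHdet]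
  have f1 : w22 P (dual2 (G⁻¹ * P * G⁻¹)) = ip2 G P P := by
    rw [w22_dual2' hP hHPH,
      show Pᵀ * (G⁻¹ * P * G⁻¹) = Pᵀ * G⁻¹ * P * G⁻¹ by simp only [Matrix.mul_assoc]]
    rfl
  have f2 : ip2 G P (dual2 (G⁻¹ * P * G⁻¹)) = (v ^ 2)⁻¹ * w22 P P := by
    simp only [ip2]
    rw [show Pᵀ * G⁻¹ * dual2 (G⁻¹ * P * G⁻¹) * G⁻¹
        = Pᵀ * (G⁻¹ * dual2 (G⁻¹ * P * G⁻¹) * G⁻¹) by simp only [Matrix.mul_assoc]]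
    rw [keyHDH, Matrix.mul_smul, Matrix.trace_smul, smul_eq_mul]
    have hw := w22_dual2' hP (dual2_skew' P)
    rw [dual2_dual2' hP] at hw
    rw [hw]
    ring
  have f5 : ip2 G (dual2 (G⁻¹ * P * G⁻¹)) P = (v ^ 2)⁻¹ * w22 P P := by
    simp only [ip2]
    rw [tr_sym' (G⁻¹) (dual2 (G⁻¹ * P * G⁻¹)) P hH]
    have h2 := f2
    simp only [ip2] at h2
    exact h2
  have f3 : w22 (dual2 (G⁻¹ * P * G⁻¹)) (dual2 (G⁻¹ * P * G⁻¹)) = (v ^ 2)⁻¹ * w22 P P := by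
    rw [w22_dual2' hDskew hHPH,
      show (dual2 (G⁻¹ * P * G⁻¹))ᵀ * (G⁻¹ * P * G⁻¹)
        = (dual2 (G⁻¹ * P * G⁻¹))ᵀ * G⁻¹ * P * G⁻¹ by simp only [Matrix.mul_assoc]]
    rw [tr_sym' (G⁻¹) (dual2 (G⁻¹ * P * G⁻¹)) P hH]
    have h2 := f2
    simp only [ip2] at h2
    exact h2
  have f4 : ip2 G (dual2 (G⁻¹ * P * G⁻¹)) (dual2 (G⁻¹ * P * G⁻¹))
      = (v ^ 2)⁻¹ * ip2 G P P := by
    simp only [ip2]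
    rw [show (dual2 (G⁻¹ * P * G⁻¹))ᵀ * G⁻¹ * dual2 (G⁻¹ * P * G⁻¹) * G⁻¹
        = (dual2 (G⁻¹ * P * G⁻¹))ᵀ * (G⁻¹ * dual2 (G⁻¹ * P * G⁻¹) * G⁻¹) by
          simp only [Matrix.mul_assoc]]
    rw [keyHDH, Matrix.mul_smul, Matrix.trace_smul, smul_eq_mul]
    rw [trace_dual_swap' hDskew hP, dual2_dual2' hHPH]
    have e2 : ((G⁻¹ * P * G⁻¹)ᵀ * P).trace = (Pᵀ * G⁻¹ * P * G⁻¹).trace := by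
      rw [show (G⁻¹ * P * G⁻¹)ᵀ * P = G⁻¹ * (Pᵀ * (G⁻¹ * P)) by
            simp only [Matrix.transpose_mul, hH, Matrix.mul_assoc],
          Matrix.trace_mul_comm]
      congr 1
      simp only [Matrix.mul_assoc]
    rw [e2]
    ring
  have hSP : hodge2 G P = v • dual2 (G⁻¹ * P * G⁻¹) := rfl
  have hu : u = w22 P P / (2 * v) := rfl
  have hupos : 0 < u := by rw [hu]; exact div_pos hpos (by positivity)
  have hune : u ≠ 0 := ne_of_gt hupos
  have hΘ : Θ = (u⁻¹ * v) • dual2 (G⁻¹ * P * G⁻¹) - (2⁻¹ * (ip2 G P P / u ^ 2)) • P := by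
    show u⁻¹ • hodge2 G P - (2⁻¹ * (ip2 G P P / u ^ 2)) • P = _
    rw [hSP, smul_smul]
  have hT : w22 Θ Θ = -((4 * v ^ 2 / w22 P P ^ 3) *
      ((ip2 G P P * v - w22 P P) * (ip2 G P P * v + w22 P P))) := by
    rw [hΘ, w22_expand', f3, w22_comm' (dual2 (G⁻¹ * P * G⁻¹)) P, f1, hu]
    field_simp
    ring
  have hE : v * ip2 G (hodge2 G P - P) (hodge2 G P - P)
      = 2 * (ip2 G P P * v - w22 P P) := by
    rw [hSP, ip2_expand', f4, f2, f5]
    field_simp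
    ring
  have hNNnn := (ip2_self_nonneg' G hG (hodge2 G P - P)).1
  have hEnn : 0 ≤ ip2 G P P * v - w22 P P := by
    have h0 := mul_nonneg hv.le hNNnn
    rw [hE] at h0
    linarith
  have hFpos : 0 < ip2 G P P * v + w22 P P := by linarith
  have hc : 0 < 4 * v ^ 2 / w22 P P ^ 3 := by positivity
  constructor
  · rw [hT]
    have h0 : 0 ≤ (4 * v ^ 2 / w22 P P ^ 3) *
        ((ip2 G P P * v - w22 P P) * (ip2 G P P * v + w22 P P)) :=
      mul_nonneg hc.le (mul_nonneg hEnn hFpos.le)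
    linarith
  · rw [hT]
    constructor
    · intro h
      have h1 : (4 * v ^ 2 / w22 P P ^ 3) *
          ((ip2 G P P * v - w22 P P) * (ip2 G P P * v + w22 P P)) = 0 := by linarith
      have h2 : (ip2 G P P * v - w22 P P) * (ip2 G P P * v + w22 P P) = 0 :=
        (mul_eq_zero.mp h1).resolve_left (ne_of_gt hc)
      have h3 : ip2 G P P * v - w22 P P = 0 :=
        (mul_eq_zero.mp h2).resolve_right (ne_of_gt hFpos)
      have h6 := hE
      rw [h3, mul_zero] at h6
      have h4 : ip2 G (hodge2 G P - P) (hodge2 G P - P) = 0 :=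
        (mul_eq_zero.mp h6).resolve_left hvne
      have h5 := (ip2_self_nonneg' G hG (hodge2 G P - P)).2.mp h4
      exact sub_eq_zero.mp h5
    · intro h
      have h5 : hodge2 G P - P = 0 := sub_eq_zero.mpr h
      have h4 : ip2 G (hodge2 G P - P) (hodge2 G P - P) = 0 :=
        (ip2_self_nonneg' G hG (hodge2 G P - P)).2.mpr h5
      have h3 : ip2 G P P * v - w22 P P = 0 := by
        have h6 := hE
        rw [h4, mul_zero] at h6
        linarith
      rw [h3]
      ring

end
end

section
/- For a smooth path t ↦ ρ_t of nondegenerate 2-forms with ρ_t∧ρ_t > 0 on an oriented Riemannian 4-manifold, with ρ₀ = ρ and derivative ρ̂ at t = 0, the derivative of Θ^{ρ_t} := (*ρ_t)/u_t - (1/2)|ρ_t/u_t|²ρ_t at t = 0 equals (ρ̂ + *^ρ ρ̂)/u - |ρ⁺/u|² ρ̂, where u := dvol_ρ/dvol and *^ρ is the Hodge star of the metric g^ρ determined by ρ. -/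
open Matrix MeasureTheory

noncomputable section

namespace ThetaAux

lemma antisym_eta (A : Mat4) (h : Aᵀ = -A) :
    A = !![0, A 0 1, A 0 2, A 0 3;
           -(A 0 1), 0, A 1 2, A 1 3;
           -(A 0 2), -(A 1 2), 0, A 2 3;
           -(A 0 3), -(A 1 3), -(A 2 3), 0] := by
  have key : ∀ i j, A j i = -A i j := fun i j => by
    have := congrFun (congrFun h i) j; simpa using this
  ext i j
  fin_cases i <;> fin_cases j <;> simp <;>
    linarith [key 0 0, key 0 1, key 0 2, key 0 3, key 1 1, key 1 2, key 1 3,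
      key 2 2, key 2 3, key 3 3]

lemma symm_eta (H : Mat4) (h : Hᵀ = H) :
    H = !![H 0 0, H 0 1, H 0 2, H 0 3;
           H 0 1, H 1 1, H 1 2, H 1 3;
           H 0 2, H 1 2, H 2 2, H 2 3;
           H 0 3, H 1 3, H 2 3, H 3 3] := by
  have key : ∀ i j, H j i = H i j := fun i j => by
    have := congrFun (congrFun h i) j; simpa using this
  ext i j
  fin_cases i <;> fin_cases j <;> simp <;>
    linarith [key 0 1, key 0 2, key 0 3, key 1 2, key 1 3, key 2 3]

set_option maxRecDepth 100000 in
lemma det4 (h00 h01 h02 h03 h11 h12 h13 h22 h23 h33 : ℝ) :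
    (!![h00,h01,h02,h03; h01,h11,h12,h13; h02,h12,h22,h23; h03,h13,h23,h33] : Mat4).det =
    h00*(h11*(h22*h33-h23*h23) - h12*(h12*h33-h23*h13) + h13*(h12*h23-h22*h13))
    - h01*(h01*(h22*h33-h23*h23) - h12*(h02*h33-h23*h03) + h13*(h02*h23-h22*h03))
    + h02*(h01*(h12*h33-h23*h13) - h11*(h02*h33-h23*h03) + h13*(h02*h13-h12*h03))
    - h03*(h01*(h12*h23-h22*h13) - h11*(h02*h23-h22*h03) + h12*(h02*h13-h12*h03)) := by
  rw [Matrix.det_succ_row_zero]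
  simp [Fin.sum_univ_succ, Matrix.det_fin_three, Matrix.submatrix_apply]
  simp [Fin.succAbove]
  ring

lemma dual2_antisym (A : Mat4) : (dual2 A)ᵀ = -(dual2 A) := by
  ext i j; fin_cases i <;> fin_cases j <;> simp [dual2]

lemma dual2_dual2 (A : Mat4) (hA : Aᵀ = -A) : dual2 (dual2 A) = A := by
  rw [antisym_eta A hA]
  ext i j; fin_cases i <;> fin_cases j <;> simp [dual2]

lemma dual2_smul (c : ℝ) (A : Mat4) : dual2 (c • A) = c • dual2 A := by
  ext i j; fin_cases i <;> fin_cases j <;> simp [dual2, mul_comm]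

lemma dual2_sub (A B : Mat4) : dual2 (A - B) = dual2 A - dual2 B := by
  ext i j; fin_cases i <;> fin_cases j <;> simp [dual2] <;> ring

lemma w22_symm (A B : Mat4) : w22 A B = w22 B A := by simp [w22]; ring

lemma w22_sub_smul_left (A B C : Mat4) (c : ℝ) :
    w22 (A - c • B) C = w22 A C - c * w22 B C := by
  simp [w22]; ring

lemma w22_smul_right (A B : Mat4) (c : ℝ) : w22 A (c • B) = c * w22 A B := by
  simp [w22]; ring

lemma mulA_dual2 (A : Mat4) (hA : Aᵀ = -A) :
    A * dual2 A = (-(w22 A A / 2)) • (1 : Mat4) := by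
  rw [antisym_eta A hA]
  ext i j
  fin_cases i <;> fin_cases j <;>
    simp [dual2, w22, Matrix.mul_apply, Fin.sum_univ_four, Matrix.one_apply] <;> ring

lemma dual2_mulA (A : Mat4) (hA : Aᵀ = -A) :
    dual2 A * A = (-(w22 A A / 2)) • (1 : Mat4) := by
  rw [antisym_eta A hA]
  ext i j
  fin_cases i <;> fin_cases j <;>
    simp [dual2, w22, Matrix.mul_apply, Fin.sum_univ_four, Matrix.one_apply] <;> ring

set_option maxRecDepth 100000 in
set_option maxHeartbeats 1000000 in
lemma lemPf (H A : Mat4) (hH : Hᵀ = H) (hA : Aᵀ = -A) :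
    w22 (H * A * H) (H * A * H) = H.det * w22 A A := by
  rw [symm_eta H hH, antisym_eta A hA, det4]
  simp only [w22, Matrix.mul_apply, Fin.sum_univ_four]
  norm_num [Matrix.cons_val_zero, Matrix.cons_val_one, Matrix.head_cons,
    Matrix.head_fin_const, Matrix.empty_val', Matrix.cons_val_fin_one, Matrix.cons_val_two,
    Matrix.cons_val_three, Matrix.tail_cons]
  ring

set_option maxRecDepth 100000 in
set_option maxHeartbeats 1000000 in
lemma key1 (H A B : Mat4) (hH : Hᵀ = H) (hA : Aᵀ = -A) (hB : Bᵀ = -B) :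
    w22 B (dual2 (H * A * H)) = (1 / 2) * (Aᵀ * H * B * H).trace := by
  rw [symm_eta H hH, antisym_eta A hA, antisym_eta B hB]
  simp only [w22, dual2, Matrix.trace, Matrix.diag, Matrix.mul_apply, Matrix.transpose_apply,
    Fin.sum_univ_four]
  norm_num [Matrix.cons_val_zero, Matrix.cons_val_one, Matrix.head_cons,
    Matrix.head_fin_const, Matrix.empty_val', Matrix.cons_val_fin_one, Matrix.cons_val_two,
    Matrix.cons_val_three, Matrix.tail_cons]
  ring


section Geometry
variable {G : Mat4} (hG : G.PosDef)

lemma Gsym (hG : G.PosDef) : Gᵀ = G := by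
  have := hG.1
  simpa [Matrix.IsHermitian, Matrix.conjTranspose_eq_transpose_of_trivial] using this

lemma GdetUnit (hG : G.PosDef) : IsUnit G.det := isUnit_iff_ne_zero.mpr hG.det_pos.ne'

lemma Hsym (hG : G.PosDef) : (G⁻¹)ᵀ = G⁻¹ := by
  rw [Matrix.transpose_nonsing_inv, Gsym hG]

lemma vol_pos (hG : G.PosDef) : 0 < volScalar G := Real.sqrt_pos.mpr hG.det_pos

lemma vol_sq (hG : G.PosDef) : volScalar G ^ 2 = G.det := Real.sq_sqrt hG.det_pos.le

lemma hodge2_antisym (G A : Mat4) : (hodge2 G A)ᵀ = -(hodge2 G A) := by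
  simp [hodge2, Matrix.transpose_smul, dual2_antisym]

lemma hodge2_sub_smul (G A B : Mat4) (c : ℝ) :
    hodge2 G (A - c • B) = hodge2 G A - c • hodge2 G B := by
  simp only [hodge2, Matrix.mul_sub, Matrix.sub_mul, Matrix.mul_smul, Matrix.smul_mul,
    dual2_sub, dual2_smul, smul_sub]
  rw [smul_comm]

lemma star_char (hG : G.PosDef) (A B : Mat4) (hA : Aᵀ = -A) (hB : Bᵀ = -B) :
    w22 B (hodge2 G A) = volScalar G * ip2 G A B := by
  rw [hodge2, w22_smul_right, key1 G⁻¹ A B (Hsym hG) hA hB, ip2]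

lemma star_star (hG : G.PosDef) (P : Mat4) (hP : Pᵀ = -P) (hw : w22 P P ≠ 0) :
    hodge2 G (hodge2 G P) = P := by
  set H := G⁻¹ with hH
  have hGH : G * H = 1 := Matrix.mul_nonsing_inv G (GdetUnit hG)
  have hHsym : Hᵀ = H := Hsym hG
  set X := H * P * H with hX
  have hXa : Xᵀ = -X := by
    rw [hX, Matrix.transpose_mul, Matrix.transpose_mul, hHsym, hP]
    simp [Matrix.mul_assoc]
  have hpf : w22 X X = H.det * w22 P P := lemPf H P hHsym hP
  -- P * (H * dual2 X) = -(w22 X X / 2) • G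
  have e0 : X * dual2 X = (-(w22 X X / 2)) • (1 : Mat4) := mulA_dual2 X hXa
  have e1 : P * (H * dual2 X) = (-(w22 X X / 2)) • G := by
    have := congrArg (fun M => G * M) e0
    simp only [hX] at this
    rw [show H * P * H * dual2 X = H * (P * (H * dual2 X)) by
      simp [Matrix.mul_assoc]] at this
    rw [← Matrix.mul_assoc, hGH, Matrix.one_mul] at this
    rw [this]
    simp [Matrix.mul_smul, hX]
  have e2 : (-(w22 P P / 2)) • (H * dual2 X) = (-(w22 X X / 2)) • (dual2 P * G) := by
    have := congrArg (fun M => dual2 P * M) e1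
    rw [← Matrix.mul_assoc, dual2_mulA P hP, Matrix.smul_mul, Matrix.one_mul] at this
    rw [this, Matrix.mul_smul]
  have e3 : H * dual2 X = H.det • (dual2 P * G) := by
    have hpne : (-(w22 P P / 2)) ≠ 0 := by
      simp only [ne_eq, neg_eq_zero, div_eq_zero_iff]; push_neg; exact ⟨hw, by norm_num⟩
    have := congrArg (fun M => (-(w22 P P / 2))⁻¹ • M) e2
    simp only [smul_smul, inv_mul_cancel₀ hpne, one_smul] at this
    rw [this, hpf]
    rw [show (-(w22 P P / 2))⁻¹ * (-(H.det * w22 P P / 2)) = H.det by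
      field_simp]
  have e4 : H * dual2 X * H = H.det • dual2 P := by
    rw [e3, Matrix.smul_mul, Matrix.mul_assoc, hGH, Matrix.mul_one]
  have hdet1 : volScalar G ^ 2 * H.det = 1 := by
    rw [vol_sq hG, ← Matrix.det_one (n := Fin 4) (R := ℝ), ← hGH, Matrix.det_mul]
  calc hodge2 G (hodge2 G P)
      = volScalar G • dual2 (H * (volScalar G • dual2 X) * H) := rfl
    _ = (volScalar G ^ 2) • dual2 (H * dual2 X * H) := by
        rw [Matrix.mul_smul, Matrix.smul_mul, dual2_smul, smul_smul, sq]
    _ = (volScalar G ^ 2) • (H.det • dual2 (dual2 P)) := by rw [e4, dual2_smul]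
    _ = P := by rw [dual2_dual2 P hP, smul_smul, hdet1, one_smul]

lemma ip2_symm (hG : G.PosDef) (A B : Mat4) : ip2 G A B = ip2 G B A := by
  simp only [ip2]
  congr 1
  rw [← Matrix.trace_transpose]
  simp only [Matrix.transpose_mul, Matrix.transpose_transpose, Hsym hG]
  rw [Matrix.trace_mul_comm]
  simp [Matrix.mul_assoc]

lemma ip2_smul_add (G : Mat4) (c : ℝ) (A B : Mat4) :
    ip2 G (c • (A + B)) (c • (A + B)) =
    c ^ 2 * (ip2 G A A + ip2 G A B + ip2 G B A + ip2 G B B) := by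
  simp only [ip2, Matrix.transpose_smul, Matrix.transpose_add, Matrix.smul_mul,
    Matrix.mul_smul, Matrix.add_mul, Matrix.mul_add, Matrix.trace_add, Matrix.trace_smul,
    smul_eq_mul]
  ring

lemma ip2_cross (hG : G.PosDef) (P : Mat4) (hP : Pᵀ = -P) (hw : w22 P P ≠ 0) :
    ip2 G (hodge2 G P) P = w22 P P / volScalar G := by
  have h := star_char hG (hodge2 G P) P (hodge2_antisym G P) hP
  rw [star_star hG P hP hw] at h
  field_simp [(vol_pos hG).ne']
  linarith [h]

lemma ip2_star_star (hG : G.PosDef) (P : Mat4) (hP : Pᵀ = -P) (hw : w22 P P ≠ 0) :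
    ip2 G (hodge2 G P) (hodge2 G P) = ip2 G P P := by
  have h := star_char hG (hodge2 G P) (hodge2 G P) (hodge2_antisym G P) (hodge2_antisym G P)
  rw [star_star hG P hP hw] at h
  have h2 := star_char hG P P hP hP
  rw [w22_symm] at h
  rw [h2] at h
  have := (vol_pos hG).ne'
  field_simp at h
  linarith

lemma ip2_Pp (hG : G.PosDef) (P : Mat4) (hP : Pᵀ = -P) (hw : w22 P P ≠ 0) :
    ip2 G ((2:ℝ)⁻¹ • (P + hodge2 G P)) ((2:ℝ)⁻¹ • (P + hodge2 G P)) =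
    ip2 G P P / 2 + w22 P P / (2 * volScalar G) := by
  rw [ip2_smul_add]
  rw [show ip2 G P (hodge2 G P) = ip2 G (hodge2 G P) P from ip2_symm hG _ _]
  rw [ip2_cross hG P hP hw, ip2_star_star hG P hP hw]
  have := (vol_pos hG).ne'
  field_simp
  ring

end Geometry

section Derivs

lemma hasDerivAt_matMul {A B : ℝ → Mat4} {A' B' : Mat4} {x : ℝ}
    (hA : ∀ i j, HasDerivAt (fun t => A t i j) (A' i j) x)
    (hB : ∀ i j, HasDerivAt (fun t => B t i j) (B' i j) x) (i j : Fin 4) :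
    HasDerivAt (fun t => (A t * B t) i j) ((A' * B x + A x * B') i j) x := by
  simp only [Matrix.mul_apply, Matrix.add_apply]
  rw [← Finset.sum_add_distrib]
  exact HasDerivAt.fun_sum fun k _ => (hA i k).mul (hB k j)

lemma hasDerivAt_dual2 {X : ℝ → Mat4} {X' : Mat4} {x : ℝ}
    (hX : ∀ i j, HasDerivAt (fun t => X t i j) (X' i j) x) (i j : Fin 4) :
    HasDerivAt (fun t => dual2 (X t) i j) (dual2 X' i j) x := by
  fin_cases i <;> fin_cases j <;>
    simp only [dual2, Matrix.cons_val', Matrix.cons_val_zero, Matrix.cons_val_one,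
      Matrix.head_cons, Matrix.head_fin_const, Matrix.empty_val', Matrix.cons_val_fin_one,
      Fin.mk_one, Fin.zero_eta, Fin.isValue] <;>
    first
      | exact hasDerivAt_const _ _
      | exact hX _ _
      | exact (hX _ _).neg

end Derivs

end ThetaAux

open ThetaAux

/-- the derivative at t = 0 of Θ^{ρ_t} along a path of
nondegenerate 2-forms with ρ₀ = ρ, ∂_t ρ_t|₀ = ρ̂, is
(ρ̂ + *^ρ ρ̂)/u - |ρ⁺/u|² ρ̂, where *^ρ = R^ρ ∘ *_g ∘ R^ρ. -/
theorem Theta_derivative (G : Mat4) (hG : G.PosDef)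
    (ρ : ℝ → Mat4) (hanti : ∀ t, (ρ t)ᵀ = -(ρ t))
    (hndg : ∀ t, 0 < w22 (ρ t) (ρ t))
    (P : Mat4) (hP : ρ 0 = P)
    (rhat : Mat4) (hderiv : ∀ i j, HasDerivAt (fun t => ρ t i j) (rhat i j) 0) :
    let u : ℝ → ℝ := fun t => w22 (ρ t) (ρ t) / (2 * volScalar G)
    let Θ : ℝ → Mat4 := fun t =>
      (u t)⁻¹ • hodge2 G (ρ t) - (2⁻¹ * (ip2 G (ρ t) (ρ t) / (u t) ^ 2)) • ρ t
    let Pp := (2:ℝ)⁻¹ • (P + hodge2 G P)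
    let D := (u 0)⁻¹ • (rhat + Rmap P (hodge2 G (Rmap P rhat))) -
      (ip2 G Pp Pp / (u 0) ^ 2) • rhat
    ∀ i j, HasDerivAt (fun t => Θ t i j) (D i j) 0 := by
  intro u Θ Pp D i j
  -- basic symmetry facts
  have hPanti : Pᵀ = -P := by rw [← hP]; exact hanti 0
  have hrhat_anti : rhatᵀ = -rhat := by
    ext a b
    have h1 : HasDerivAt (fun t => ρ t b a) (rhat b a) 0 := hderiv b a
    have h2 : HasDerivAt (fun t => ρ t b a) (-(rhat a b)) 0 := by
      have hfun : (fun t => ρ t b a) = fun t => -(ρ t a b) := funext fun t => by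
        have := congrFun (congrFun (hanti t) a) b; simpa using this
      rw [hfun]; exact (hderiv a b).neg
    have := h1.unique h2
    simp [Matrix.transpose_apply, Matrix.neg_apply, this]
  have hs : 0 < volScalar G := vol_pos hG
  have ha0 : 0 < w22 P P := by rw [← hP]; exact hndg 0
  have hu0 : u 0 = w22 P P / (2 * volScalar G) := by
    show w22 (ρ 0) (ρ 0) / (2 * volScalar G) = _
    rw [hP]
  have hu0ne : u 0 ≠ 0 := by rw [hu0]; positivity
  set H := G⁻¹ with hHdef
  have hHsym : Hᵀ = H := Hsym hG
  -- derivative of w22 (ρ t) (ρ t)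
  have hw' : HasDerivAt (fun t => w22 (ρ t) (ρ t)) (2 * w22 P rhat) 0 := by
    have h := ((((((hderiv 0 1).mul (hderiv 2 3)).sub ((hderiv 0 2).mul (hderiv 1 3))).add
      ((hderiv 0 3).mul (hderiv 1 2))).add ((hderiv 2 3).mul (hderiv 0 1))).sub
      ((hderiv 1 3).mul (hderiv 0 2))).add ((hderiv 1 2).mul (hderiv 0 3))
    refine h.congr_deriv (Eq.symm ?_)
    rw [hP]
    simp only [w22]
    ring
  have hu : HasDerivAt u (w22 P rhat / volScalar G) 0 := by
    have h := hw'.div_const (2 * volScalar G)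
    refine h.congr_deriv (Eq.symm ?_)
    field_simp
  -- entry derivatives of constant matrices
  have hHconst : ∀ (i j : Fin 4), HasDerivAt (fun _ : ℝ => H i j) ((0 : Mat4) i j) 0 :=
    fun i j => by simpa using hasDerivAt_const (0:ℝ) (H i j)
  have hT : ∀ (i j : Fin 4), HasDerivAt (fun t => (ρ t)ᵀ i j) (rhatᵀ i j) 0 := fun i j => by
    simpa [Matrix.transpose_apply] using hderiv j i
  -- derivative of ip2
  have m1 := hasDerivAt_matMul (A := fun t => (ρ t)ᵀ) (B := fun _ => H) hT hHconst
  have m2 := hasDerivAt_matMul (A := fun t => (ρ t)ᵀ * H) (B := ρ) m1 hderiv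
  have m3 := hasDerivAt_matMul (A := fun t => (ρ t)ᵀ * H * ρ t) (B := fun _ => H) m2 hHconst
  have htr : HasDerivAt (fun t => ip2 G (ρ t) (ρ t)) (2 * ip2 G P rhat) 0 := by
    have hsum := HasDerivAt.sum (u := Finset.univ) (fun k _ => m3 k k)
    have h := hsum.const_mul (1/2 : ℝ)
    have hfun : (fun t => ip2 G (ρ t) (ρ t)) =
        (fun t => (1/2 : ℝ) * ∑ k : Fin 4, ((ρ t)ᵀ * H * ρ t * H) k k) := by
      funext t
      simp only [ip2, Matrix.trace, Matrix.diag, hHdef]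
    rw [hfun]
    refine h.congr_deriv (Eq.symm ?_)
    simp only [hP, Matrix.mul_zero, Matrix.zero_mul, add_zero, zero_add,
      Matrix.add_mul, Matrix.add_apply]
    simp only [Matrix.zero_apply, Finset.sum_const_zero, add_zero]
    rw [Finset.sum_add_distrib]
    have hswap : ((rhatᵀ * H * P) * H).trace = ((Pᵀ * H * rhat) * H).trace := by
      rw [← Matrix.trace_transpose]
      simp only [Matrix.transpose_mul, Matrix.transpose_transpose, hHsym]
      rw [Matrix.trace_mul_comm]
      simp [Matrix.mul_assoc]
    have hswap' : (∑ k : Fin 4, (rhatᵀ * H * P * H) k k) =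
        ∑ k : Fin 4, (Pᵀ * H * rhat * H) k k := hswap
    rw [hswap']
    simp only [ip2, Matrix.trace, Matrix.diag_apply, hHdef, Matrix.diag]
    ring
  -- entry derivatives of hodge2 G (ρ t)
  have hX : ∀ (i j : Fin 4), HasDerivAt (fun t => (H * ρ t * H) i j) ((H * rhat * H) i j) 0 := by
    intro i j
    have h := hasDerivAt_matMul (A := fun t => H * ρ t) (B := fun _ => H)
      (hasDerivAt_matMul (A := fun _ => H) (B := ρ) hHconst hderiv) hHconst
    have := h i j
    simpa [hP, Matrix.mul_zero, Matrix.zero_mul, add_zero, zero_add] using this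
  have hh : ∀ (i j : Fin 4), HasDerivAt (fun t => hodge2 G (ρ t) i j)
      (hodge2 G rhat i j) 0 := by
    intro i j
    have h := (hasDerivAt_dual2 hX i j).const_mul (volScalar G)
    have hfun : (fun t => hodge2 G (ρ t) i j) =
        (fun t => volScalar G * dual2 (H * ρ t * H) i j) := by
      funext t; simp only [hodge2, Matrix.smul_apply, smul_eq_mul, hHdef]
    rw [hfun]
    simpa [hodge2, Matrix.smul_apply, smul_eq_mul, hHdef] using h
  -- assemble
  have T1 := (hu.inv hu0ne).mul (hh i j)
  have T2 := ((htr.div (hu.pow 2) (pow_ne_zero 2 hu0ne)).const_mul (2⁻¹ : ℝ)).mul (hderiv i j)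
  have total := T1.sub T2
  have hgoalfun : (fun t => Θ t i j) = (fun t =>
      (u t)⁻¹ * hodge2 G (ρ t) i j - 2⁻¹ * (ip2 G (ρ t) (ρ t) / u t ^ 2) * ρ t i j) := by
    funext t
    show ((u t)⁻¹ • hodge2 G (ρ t) - (2⁻¹ * (ip2 G (ρ t) (ρ t) / (u t) ^ 2)) • ρ t) i j = _
    simp [Matrix.sub_apply, Matrix.smul_apply, smul_eq_mul]
  rw [hgoalfun]
  refine total.congr_deriv (Eq.symm ?_)
  -- now the value identity
  -- expand D
  have hc1 : Rmap P rhat = rhat - (w22 rhat P / (w22 P P / 2)) • P := rfl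
  have hS : hodge2 G (Rmap P rhat) =
      hodge2 G rhat - (w22 rhat P / (w22 P P / 2)) • hodge2 G P := by
    rw [hc1, hodge2_sub_smul]
  have hw_hr_P : w22 (hodge2 G rhat) P = volScalar G * ip2 G P rhat := by
    rw [w22_symm, star_char hG rhat P hrhat_anti hPanti, ip2_symm hG]
  have hw_hP_P : w22 (hodge2 G P) P = volScalar G * ip2 G P P := by
    rw [w22_symm, star_char hG P P hPanti hPanti]
  have hwS : w22 (hodge2 G (Rmap P rhat)) P =
      volScalar G * ip2 G P rhat - (w22 rhat P / (w22 P P / 2)) * (volScalar G * ip2 G P P) := by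
    rw [hS, w22_sub_smul_left, hw_hr_P, hw_hP_P]
  have hR2 : Rmap P (hodge2 G (Rmap P rhat)) =
      hodge2 G rhat - (w22 rhat P / (w22 P P / 2)) • hodge2 G P -
      ((volScalar G * ip2 G P rhat - (w22 rhat P / (w22 P P / 2)) * (volScalar G * ip2 G P P))
        / (w22 P P / 2)) • P := by
    show hodge2 G (Rmap P rhat) -
      (w22 (hodge2 G (Rmap P rhat)) P / (w22 P P / 2)) • P = _
    rw [hwS, hS]
  have hPp : ip2 G Pp Pp = ip2 G P P / 2 + w22 P P / (2 * volScalar G) :=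
    ip2_Pp hG P hPanti ha0.ne'
  have hDval : D i j = (u 0)⁻¹ * (rhat i j + (hodge2 G rhat i j
      - (w22 rhat P / (w22 P P / 2)) * hodge2 G P i j
      - ((volScalar G * ip2 G P rhat - (w22 rhat P / (w22 P P / 2)) * (volScalar G * ip2 G P P))
        / (w22 P P / 2)) * P i j))
      - (ip2 G Pp Pp / (u 0) ^ 2) * rhat i j := by
    show ((u 0)⁻¹ • (rhat + Rmap P (hodge2 G (Rmap P rhat))) -
      (ip2 G Pp Pp / (u 0) ^ 2) • rhat) i j = _
    rw [hR2]
    simp [Matrix.sub_apply, Matrix.add_apply, Matrix.smul_apply, smul_eq_mul]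
    ring
  simp only [Pi.pow_apply, Pi.inv_apply, Pi.div_apply]
  rw [hDval, hPp, hu0, w22_symm rhat P]
  rw [hP]
  have hsne := hs.ne'
  have ha0ne := ha0.ne'
  field_simp
  linear_combination (-(w22 P P * w22 P rhat * volScalar G * ip2 G P P * P i j * 4)) *
    mul_inv_cancel₀ hsne

end
end
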